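/- arXiv:2405.16592 — 2 statements merged into one kernel-verified Lean document; each statement's English description precedes it below -/
import Mathlib

section
/- Let n be a natural number and let a : ℕ → ℕ be a finitely supported function satisfying a(0) = a(1) = a(2) = 0, ∑_{i} a(i) = n + 2, and ∑_{i} i · a(i) = 4n. Then a(3) ≥ 8. -/
theorem triangular_regions_count (n : ℕ) (a : ℕ →₀ ℕ)
    (h0 : a 0 = 0) (h1 : a 1 = 0) (h2 : a 2 = 0)
    (hsum : ∑ i ∈ a.support, a i = n + 2)
    (hwsum : ∑ i ∈ a.support, i * a i = 4 * n) :
    8 ≤ a 3 := by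
  have key : ∑ i ∈ a.support, ((i : ℤ) - 4) * a i = -8 := by
    have e1 : ∑ i ∈ a.support, ((i : ℤ) - 4) * a i
        = ((∑ i ∈ a.support, i * a i : ℕ) : ℤ)
          - 4 * ((∑ i ∈ a.support, a i : ℕ) : ℤ) := by
      push_cast
      rw [Finset.mul_sum, ← Finset.sum_sub_distrib]
      exact Finset.sum_congr rfl fun i _ => by ring
    rw [e1, hsum, hwsum]
    push_cast
    ring
  have hge4 : ∀ i ∈ a.support.erase 3, 0 ≤ ((i : ℤ) - 4) * a i := by
    intro i hi
    have hne3 := Finset.ne_of_mem_erase hi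
    have hmem := Finset.mem_of_mem_erase hi
    have hne : a i ≠ 0 := Finsupp.mem_support_iff.mp hmem
    have h4 : 4 ≤ i := by
      rcases Nat.lt_or_ge i 4 with h | h
      · interval_cases i <;> simp_all
      · exact h
    have hnn : (0 : ℤ) ≤ (i : ℤ) - 4 := by
      have : (4 : ℤ) ≤ (i : ℤ) := by exact_mod_cast h4
      linarith
    positivity
  have hsum_erase : 0 ≤ ∑ i ∈ a.support.erase 3, ((i : ℤ) - 4) * a i :=
    Finset.sum_nonneg hge4
  by_cases h3 : 3 ∈ a.support
  · have hsplit := Finset.add_sum_erase _ (fun i : ℕ => ((i : ℤ) - 4) * a i) h3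
    have heq : ((3 : ℤ) - 4) * a 3 + ∑ i ∈ a.support.erase 3, ((i : ℤ) - 4) * a i = -8 := by
      rw [← key, ← hsplit]; norm_num
    have : (8 : ℤ) ≤ a 3 := by linarith
    exact_mod_cast this
  · rw [Finset.erase_eq_of_notMem h3] at hsum_erase
    rw [key] at hsum_erase
    norm_num at hsum_erase
end

section
/- Let k be a field and let y₁, y₂, y₃ ∈ k be such that y₁, y₂, y₃ are all nonzero. Define F₁ = 1 + y₂ + y₂y₃, F₂ = 1 + y₃ + y₁y₃, F₃ = 1 + y₁ + y₁y₂, and assume F₁, F₂, F₃ are all nonzero. Then the following three identities hold in k: (1) 1 + F₁/(y₃F₃) + (F₁/(y₃F₃))·(F₂/(y₁F₁)) = F₂/(y₁y₃); (2) 1 + F₂/(y₁F₁) + (F₂/(y₁F₁))·(F₃/(y₂F₂)) = F₃/(y₁y₂); (3) 1 + F₃/(y₂F₂) + (F₃/(y₂F₂))·(F₁/(y₃F₃)) = F₁/(y₂y₃). -/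
theorem phi_of_Fbar {k : Type*} [Field k] (y₁ y₂ y₃ : k)
    (hy₁ : y₁ ≠ 0) (hy₂ : y₂ ≠ 0) (hy₃ : y₃ ≠ 0)
    (F₁ F₂ F₃ : k)
    (hF₁ : F₁ = 1 + y₂ + y₂ * y₃)
    (hF₂ : F₂ = 1 + y₃ + y₁ * y₃)
    (hF₃ : F₃ = 1 + y₁ + y₁ * y₂)
    (hF₁0 : F₁ ≠ 0) (hF₂0 : F₂ ≠ 0) (hF₃0 : F₃ ≠ 0) :
    1 + F₁ / (y₃ * F₃) + (F₁ / (y₃ * F₃)) * (F₂ / (y₁ * F₁)) = F₂ / (y₁ * y₃) ∧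
    1 + F₂ / (y₁ * F₁) + (F₂ / (y₁ * F₁)) * (F₃ / (y₂ * F₂)) = F₃ / (y₁ * y₂) ∧
    1 + F₃ / (y₂ * F₂) + (F₃ / (y₂ * F₂)) * (F₁ / (y₃ * F₃)) = F₁ / (y₂ * y₃) := by
  refine ⟨?_, ?_, ?_⟩ <;> field_simp <;> subst hF₁ hF₂ hF₃ <;> ring
end
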